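/- arXiv:2203.14636 — 3 statements merged into one kernel-verified Lean document; each statement's English description precedes it below -/
import Mathlib

section
/- Suppose d₁, d₂, d₃, d₄ > 0 satisfy d₂ = d̂₂ d₁/(2d₁ − d̂₁), d₃ = d̂₃ d₁/d̂₁, d₄ = d̂₄ d₁/(2d₁ − d̂₁) (with 2d₁ ≠ d̂₁), together with the constraint d₁² + d₃² − d₂² − d₄² = 0, where d̂₁, d̂₂, d̂₃, d̂₄ > 0. Then d₁ = d̂₁ (K₁₃ ± √(K₁₃ K₂₄)) / (2 K₁₃), where K₁₃ = d̂₁² + d̂₃² and K₂₄ = d̂₂² + d̂₄². -/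
/-- ML-estimation closed form: under the first-order relations and the rectangle
constraint, `d₁ = d̂₁ (K₁₃ ± √(K₁₃K₂₄)) / (2K₁₃)`. -/
theorem stmt1 (d₁ d₂ d₃ d₄ dh₁ dh₂ dh₃ dh₄ : ℝ)
    (hd₁ : 0 < d₁) (hd₂ : 0 < d₂) (hd₃ : 0 < d₃) (hd₄ : 0 < d₄)
    (hdh₁ : 0 < dh₁) (hdh₂ : 0 < dh₂) (hdh₃ : 0 < dh₃) (hdh₄ : 0 < dh₄)
    (hne : 2 * d₁ ≠ dh₁)
    (h₂ : d₂ = dh₂ * d₁ / (2 * d₁ - dh₁))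
    (h₃ : d₃ = dh₃ * d₁ / dh₁)
    (h₄ : d₄ = dh₄ * d₁ / (2 * d₁ - dh₁))
    (hcon : d₁ ^ 2 + d₃ ^ 2 - d₂ ^ 2 - d₄ ^ 2 = 0) :
    d₁ = dh₁ * ((dh₁ ^ 2 + dh₃ ^ 2) +
        Real.sqrt ((dh₁ ^ 2 + dh₃ ^ 2) * (dh₂ ^ 2 + dh₄ ^ 2))) / (2 * (dh₁ ^ 2 + dh₃ ^ 2)) ∨
    d₁ = dh₁ * ((dh₁ ^ 2 + dh₃ ^ 2) -
        Real.sqrt ((dh₁ ^ 2 + dh₃ ^ 2) * (dh₂ ^ 2 + dh₄ ^ 2))) / (2 * (dh₁ ^ 2 + dh₃ ^ 2)) := by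
  set K₁₃ := dh₁ ^ 2 + dh₃ ^ 2 with hK13
  set K₂₄ := dh₂ ^ 2 + dh₄ ^ 2 with hK24
  have hK13pos : 0 < K₁₃ := by positivity
  have hK24pos : 0 < K₂₄ := by positivity
  have hsub : (2 * d₁ - dh₁) ≠ 0 := sub_ne_zero.mpr hne
  have hdh1 : dh₁ ≠ 0 := ne_of_gt hdh₁
  -- key equation
  have key : K₁₃ * (2 * d₁ - dh₁) ^ 2 = dh₁ ^ 2 * K₂₄ := by
    subst h₂ h₃ h₄
    field_simp at hcon
    have hfac : (2 * d₁ - dh₁) ^ 2 * d₁ ^ 2 *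
        (K₁₃ * (2 * d₁ - dh₁) ^ 2 - dh₁ ^ 2 * K₂₄) = 0 := by
      have hsub' : d₁ * 2 - dh₁ ≠ 0 := by intro h; exact hsub (by linarith)
      have hy : (d₁ * 2 - dh₁) ^ 2 * ((d₁ * 2 - dh₁) ^ 2)⁻¹ = 1 := mul_inv_cancel₀ (pow_ne_zero 2 hsub')
      rw [hK13, hK24]; linear_combination ((d₁ * 2 - dh₁) ^ 2) ^ 2 * hcon + d₁ ^ 2 * dh₁ ^ 2 * (dh₂ ^ 2 + dh₄ ^ 2) * (d₁ * 2 - dh₁) ^ 2 * hy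
    rcases mul_eq_zero.mp hfac with h | h
    · rcases mul_eq_zero.mp h with h | h
      · exact absurd h (pow_ne_zero _ hsub)
      · exact absurd h (pow_ne_zero _ hd₁.ne')
    · linarith
  set s := Real.sqrt (K₁₃ * K₂₄) with hs
  have hsnn : 0 ≤ s := Real.sqrt_nonneg _
  have hs2 : s ^ 2 = K₁₃ * K₂₄ := Real.sq_sqrt (by positivity)
  have hsq : (K₁₃ * (2 * d₁ - dh₁)) ^ 2 = (dh₁ * s) ^ 2 := by
    linear_combination K₁₃ * key - dh₁ ^ 2 * hs2
  rcases sq_eq_sq_iff_eq_or_eq_neg.mp hsq with h | h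
  · left
    field_simp
    linarith [h]
  · right
    field_simp
    linarith [h]
end

section
/- For the coplanar anchor configuration p₁=(0,0,0), p₂=(0,a,0), p₃=(0,a,b), p₄=(0,0,b) with a,b > 0 and a target p = (x,y,z) with x > 0, the four unit vectors uₘ = (p − pₘ)/‖p − pₘ‖ span ℝ³, so the Fisher information matrix Ψ = (1/σ²)Σₘ uₘuₘᵀ is invertible. -/
open Finset

/-- For the coplanar rectangle-corner anchors and a target strictly in front of the
plane (`x > 0`), the four unit direction vectors span ℝ³ and the Fisher information
matrix `Ψ = (1/σ²)Σₘ uₘuₘᵀ` is invertible. -/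
theorem stmt13 (a b x y z : ℝ) (ha : 0 < a) (hb : 0 < b) (hx : 0 < x)
    (σ2 : ℝ) (hσ : 0 < σ2)
    (p : EuclideanSpace ℝ (Fin 3)) (hp : p 0 = x ∧ p 1 = y ∧ p 2 = z)
    (anchors : Fin 4 → EuclideanSpace ℝ (Fin 3))
    (h1 : anchors 0 0 = 0 ∧ anchors 0 1 = 0 ∧ anchors 0 2 = 0)
    (h2 : anchors 1 0 = 0 ∧ anchors 1 1 = a ∧ anchors 1 2 = 0)
    (h3 : anchors 2 0 = 0 ∧ anchors 2 1 = a ∧ anchors 2 2 = b)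
    (h4 : anchors 3 0 = 0 ∧ anchors 3 1 = 0 ∧ anchors 3 2 = b)
    (u : Fin 4 → EuclideanSpace ℝ (Fin 3))
    (hu : ∀ m, u m = ‖p - anchors m‖⁻¹ • (p - anchors m))
    (Ψ : Matrix (Fin 3) (Fin 3) ℝ)
    (hΨ : ∀ i j, Ψ i j = (1 / σ2) * ∑ m, u m i * u m j) :
    Submodule.span ℝ (Set.range u) = ⊤ ∧ IsUnit Ψ := by
  -- coordinates of p - anchors m
  have hv : ∀ m i, (p - anchors m) i = p i - anchors m i := by
    intro m i; rfl
  have hvne : ∀ m, (p - anchors m) ≠ 0 := by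
    intro m h
    have h0 : (p - anchors m) 0 = 0 := by rw [h]; rfl
    have hx0 : anchors m 0 = 0 := by
      fin_cases m
      · exact h1.1
      · exact h2.1
      · exact h3.1
      · exact h4.1
    rw [hv, hx0, hp.1, sub_zero] at h0
    exact hx.ne' h0
  have hnorm : ∀ m, ‖p - anchors m‖ ≠ 0 := fun m => norm_ne_zero_iff.2 (hvne m)
  -- coordinates of u
  have hui : ∀ m i, u m i = ‖p - anchors m‖⁻¹ * (p - anchors m) i := by
    intro m i; rw [hu m]; rfl
  -- key zero lemma
  have key : ∀ w : EuclideanSpace ℝ (Fin 3), (∀ m, ∑ i, u m i * w i = 0) → w = 0 := by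
    intro w hw
    have hvw : ∀ m, ∑ i, (p - anchors m) i * w i = 0 := by
      intro m
      have := hw m
      simp only [hui, mul_assoc, ← Finset.mul_sum] at this
      exact (mul_eq_zero.1 this).resolve_left (inv_ne_zero (hnorm m))
    have e0 := hvw 0
    have e1 := hvw 1
    have e2 := hvw 2
    simp only [hv, hp.1, hp.2.1, hp.2.2, h1.1, h1.2.1, h1.2.2, h2.1, h2.2.1, h2.2.2,
      h3.1, h3.2.1, h3.2.2, Fin.sum_univ_three, sub_zero] at e0 e1 e2
    have hw1 : w 1 = 0 := by
      have : a * w 1 = 0 := by linear_combination e0 - e1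
      exact (mul_eq_zero.1 this).resolve_left ha.ne'
    have hw2 : w 2 = 0 := by
      have : b * w 2 = 0 := by linear_combination e1 - e2
      exact (mul_eq_zero.1 this).resolve_left hb.ne'
    have hw0 : w 0 = 0 := by
      have : x * w 0 = 0 := by linear_combination e0 - y * hw1 - z * hw2
      exact (mul_eq_zero.1 this).resolve_left hx.ne'
    ext i
    fin_cases i <;> simp [hw0, hw1, hw2]
  -- span claim via orthogonal complement
  have hspan : Submodule.span ℝ (Set.range u) = ⊤ := by
    rw [← Submodule.orthogonal_eq_bot_iff]
    rw [Submodule.eq_bot_iff]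
    intro w hw
    refine key w (fun m => ?_)
    have := hw (u m) (Submodule.subset_span ⟨m, rfl⟩)
    simpa [PiLp.inner_apply, mul_comm] using this
  refine ⟨hspan, ?_⟩
  -- quadratic form
  have quad : ∀ w : Fin 3 → ℝ, dotProduct w (Ψ.mulVec w) = (1 / σ2) * ∑ m, (∑ i, u m i * w i) ^ 2 := by
    intro w
    simp only [dotProduct, Matrix.mulVec, hΨ, Fin.sum_univ_three, Fin.sum_univ_four]
    ring
  have hpd : Ψ.PosDef := by
    rw [Matrix.posDef_iff_dotProduct_mulVec]
    constructor
    · ext i j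
      simp only [Matrix.conjTranspose_apply, hΨ, star_trivial]
      congr 1
      exact Finset.sum_congr rfl (fun m _ => mul_comm _ _)
    · intro w hw
      have : dotProduct w (Ψ.mulVec w) = (1 / σ2) * ∑ m, (∑ i, u m i * w i) ^ 2 := quad w
      simp only [star_trivial]
      rw [this]
      have hne : ∃ m, (∑ i, u m i * w i) ≠ 0 := by
        by_contra h
        push_neg at h
        exact hw (by simpa using congrArg WithLp.ofLp (key (WithLp.toLp 2 w) h))
      obtain ⟨m, hm⟩ := hne
      have hpos : 0 < ∑ m, (∑ i, u m i * w i) ^ 2 :=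
        Finset.sum_pos' (fun m _ => sq_nonneg _)
          ⟨m, Finset.mem_univ m, by positivity⟩
      positivity
  exact hpd.isUnit
end

section
/- Fix d̂₁,…,d̂₄ > 0, let K₁₃ = d̂₁² + d̂₃², K₂₄ = d̂₂² + d̂₄², and define d₁ = d̂₁(K₁₃ + √(K₁₃K₂₄))/(2K₁₃), d₃ = d̂₃ d₁/d̂₁, d₂ = d̂₂ d₁/(2d₁ − d̂₁), d₄ = d̂₄ d₁/(2d₁ − d̂₁). Then d₁ > d̂₁/2 (so the formulas are well defined), all dₘ > 0, and d₁² + d₃² = d₂² + d₄². -/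
/-- The closed-form ML solution (with the `+` root) is well defined and satisfies the
rectangle-distance constraint `d₁² + d₃² = d₂² + d₄²`. -/
theorem stmt14 (dh₁ dh₂ dh₃ dh₄ : ℝ)
    (hdh₁ : 0 < dh₁) (hdh₂ : 0 < dh₂) (hdh₃ : 0 < dh₃) (hdh₄ : 0 < dh₄)
    (K₁₃ K₂₄ d₁ d₂ d₃ d₄ : ℝ)
    (hK₁₃ : K₁₃ = dh₁ ^ 2 + dh₃ ^ 2) (hK₂₄ : K₂₄ = dh₂ ^ 2 + dh₄ ^ 2)
    (h₁ : d₁ = dh₁ * (K₁₃ + Real.sqrt (K₁₃ * K₂₄)) / (2 * K₁₃))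
    (h₃ : d₃ = dh₃ * d₁ / dh₁)
    (h₂ : d₂ = dh₂ * d₁ / (2 * d₁ - dh₁))
    (h₄ : d₄ = dh₄ * d₁ / (2 * d₁ - dh₁)) :
    dh₁ / 2 < d₁ ∧ 0 < d₁ ∧ 0 < d₂ ∧ 0 < d₃ ∧ 0 < d₄ ∧
    d₁ ^ 2 + d₃ ^ 2 = d₂ ^ 2 + d₄ ^ 2 := by
  have hK13 : 0 < K₁₃ := by rw [hK₁₃]; positivity
  have hK24 : 0 < K₂₄ := by rw [hK₂₄]; positivity
  set s := Real.sqrt (K₁₃ * K₂₄) with hsdef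
  have hs2 : s ^ 2 = K₁₃ * K₂₄ := Real.sq_sqrt (by positivity)
  have hspos : 0 < s := Real.sqrt_pos.mpr (by positivity)
  have hd1 : dh₁ / 2 < d₁ := by
    rw [h₁]
    rw [div_lt_div_iff₀ (by norm_num) (by positivity)]
    nlinarith
  have hd1pos : 0 < d₁ := lt_trans (by positivity) hd1
  have he : 2 * d₁ - dh₁ = dh₁ * s / K₁₃ := by
    rw [h₁]; field_simp; ring
  have hepos : 0 < 2 * d₁ - dh₁ := by rw [he]; positivity
  refine ⟨hd1, hd1pos, ?_, ?_, ?_, ?_⟩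
  · rw [h₂]; positivity
  · rw [h₃]; positivity
  · rw [h₄]; positivity
  · rw [h₂, h₃, h₄, he]
    rw [hK₁₃, hK₂₄] at hs2
    field_simp
    linear_combination (dh₁ ^ 2 + dh₃ ^ 2) * hs2 - ((dh₂ ^ 2 + dh₄ ^ 2) * (dh₁ ^ 2 + dh₃ ^ 2 + K₁₃)) * hK₁₃
end
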